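/- Let ρ be a density matrix (PSD, trace one) on a finite-dimensional Hilbert space, P an orthogonal projection and Q = I − P. Then ‖PρQ‖₂² ≤ ‖PρP‖_op · Tr(QρQ), where ‖·‖₂ is the Hilbert–Schmidt norm and ‖·‖_op the operator norm. -/

import Mathlib

open Matrix
open scoped ComplexOrder

attribute [local instance] Matrix.instL2OpNormedAddCommGroup

private lemma aux_trace_nonneg {n : Type*} [Fintype n] [DecidableEq n]
    {M : Matrix n n ℂ} (hM : M.PosSemidef) : 0 ≤ M.trace := by
  rw [Matrix.trace]
  apply Finset.sum_nonneg
  intro i _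
  have := hM.dotProduct_mulVec_nonneg (Pi.single i 1)
  simpa [dotProduct, Matrix.mulVec, Pi.single_apply, Finset.mul_sum] using this

private lemma aux_key_psd {m n : Type*} [Fintype m] [Fintype n] [DecidableEq n]
    (A : Matrix m n ℂ) :
    (((‖A‖ ^ 2 : ℝ) : ℂ) • (1 : Matrix n n ℂ) - Aᴴ * A).PosSemidef := by
  refine posSemidef_iff_dotProduct_mulVec.mpr ⟨?_, ?_⟩
  · unfold Matrix.IsHermitian
    rw [conjTranspose_sub, conjTranspose_smul, conjTranspose_one,
      conjTranspose_mul, conjTranspose_conjTranspose]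
    norm_num
  · intro x
    have hexp : star x ⬝ᵥ ((((‖A‖ ^ 2 : ℝ) : ℂ) • (1 : Matrix n n ℂ) - Aᴴ * A) *ᵥ x)
        = ((‖A‖ ^ 2 : ℝ) : ℂ) * (star x ⬝ᵥ x) - star (A *ᵥ x) ⬝ᵥ (A *ᵥ x) := by
      rw [sub_mulVec, dotProduct_sub, smul_mulVec, one_mulVec, dotProduct_smul,
        ← mulVec_mulVec, dotProduct_mulVec, ← star_mulVec, smul_eq_mul]
    rw [hexp]
    set xE : EuclideanSpace ℂ n := (WithLp.equiv 2 (n → ℂ)).symm x with hxE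
    set yE : EuclideanSpace ℂ m := (WithLp.equiv 2 (m → ℂ)).symm (A *ᵥ x) with hyE
    have h1 : star x ⬝ᵥ x = ((‖xE‖ : ℝ) : ℂ) ^ 2 :=
      by have hi := inner_self_eq_norm_sq_to_K (𝕜 := ℂ) xE
         rw [EuclideanSpace.inner_eq_star_dotProduct, dotProduct_comm] at hi; exact hi
    have h2 : star (A *ᵥ x) ⬝ᵥ (A *ᵥ x) = ((‖yE‖ : ℝ) : ℂ) ^ 2 :=
      by have hi := inner_self_eq_norm_sq_to_K (𝕜 := ℂ) yE
         rw [EuclideanSpace.inner_eq_star_dotProduct, dotProduct_comm] at hi; exact hi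
    rw [h1, h2]
    have hle : ‖yE‖ ≤ ‖A‖ * ‖xE‖ := A.l2_opNorm_mulVec xE
    have hreal : ‖yE‖ ^ 2 ≤ ‖A‖ ^ 2 * ‖xE‖ ^ 2 := by
      nlinarith [norm_nonneg yE, norm_nonneg xE, norm_nonneg A]
    have hc : (0 : ℂ) ≤ ((‖A‖ ^ 2 * ‖xE‖ ^ 2 - ‖yE‖ ^ 2 : ℝ) : ℂ) := by
      rw [Complex.zero_le_real]
      linarith
    calc (0 : ℂ) ≤ ((‖A‖ ^ 2 * ‖xE‖ ^ 2 - ‖yE‖ ^ 2 : ℝ) : ℂ) := hc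
      _ = ((‖A‖ ^ 2 : ℝ) : ℂ) * ((‖xE‖ : ℝ) : ℂ) ^ 2 - ((‖yE‖ : ℝ) : ℂ) ^ 2 := by
          push_cast; ring

private lemma aux_congr {n : Type*} [Fintype n] [DecidableEq n]
    (S Q P ρ : Matrix n n ℂ) (c : ℝ)
    (hSH : Sᴴ = S) (hQH : Qᴴ = Q) (hPH : Pᴴ = P) (hSS : S * S = ρ) :
    (S * Q)ᴴ * (((c : ℂ)) • (1 : Matrix n n ℂ) - (P * S)ᴴ * (P * S)) * (S * Q)
      = ((c : ℝ) : ℂ) • (Q * ρ * Q) - (Q * ρ * P) * (P * ρ * Q) := by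
  rw [conjTranspose_mul, hSH, hQH, conjTranspose_mul, hSH, hPH, ← hSS]
  rw [mul_sub, sub_mul, mul_smul_comm, mul_one, smul_mul_assoc]
  congr 1
  · congr 1
    noncomm_ring
  · noncomm_ring

/-- Schur-complement trace bound: for a density matrix ρ and projection P with
Q = 1 − P, one has ‖PρQ‖₂² ≤ ‖PρP‖_op · Tr(QρQ), where ‖B‖₂² = Tr(BᴴB) is the
squared Hilbert–Schmidt norm and ‖·‖ the L²-operator norm. -/
theorem schur_coherence_bound {n : Type*} [Fintype n] [DecidableEq n]
    (ρ P : Matrix n n ℂ) (hρ : ρ.PosSemidef) (htr : ρ.trace = 1)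
    (hP : P.IsHermitian) (hP2 : P * P = P) :
    let Q : Matrix n n ℂ := 1 - P
    let B : Matrix n n ℂ := P * ρ * Q
    ((Bᴴ * B).trace).re ≤ ‖P * ρ * P‖ * ((Q * ρ * Q).trace).re := by
  intro Q B
  obtain ⟨S, hS, hSS⟩ : ∃ S : Matrix n n ℂ, S.PosSemidef ∧ S * S = ρ :=
    open scoped MatrixOrder in
    ⟨CFC.sqrt ρ, (CFC.sqrt_nonneg ρ).posSemidef, CFC.sqrt_mul_sqrt_self ρ hρ.nonneg⟩
  have hSH : Sᴴ = S := hS.1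
  have hQH : Qᴴ = Q := by
    show (1 - P)ᴴ = 1 - P
    rw [conjTranspose_sub, conjTranspose_one, hP.eq]
  have hfac : P * ρ * P = (P * S) * (P * S)ᴴ := by
    rw [conjTranspose_mul, hSH, hP.eq, ← hSS]
    noncomm_ring
  have hnorm : ‖P * ρ * P‖ = ‖P * S‖ ^ 2 := by
    have h := Matrix.l2_opNorm_conjTranspose_mul_self (P * S)ᴴ
    rw [conjTranspose_conjTranspose, Matrix.l2_opNorm_conjTranspose] at h
    rw [hfac, h]; ring
  have hK := aux_key_psd (P * S)
  have hcong := hK.conjTranspose_mul_mul_same (S * Q)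
  have hBH : Bᴴ = Q * ρ * P := by
    show (P * ρ * Q)ᴴ = Q * ρ * P
    rw [conjTranspose_mul, conjTranspose_mul, hQH, hP.eq, hρ.1.eq, mul_assoc]
  have hfact : (S * Q)ᴴ * ((((‖P * S‖ ^ 2 : ℝ) : ℂ) • (1 : Matrix n n ℂ)
        - (P * S)ᴴ * (P * S))) * (S * Q)
      = ((‖P * S‖ ^ 2 : ℝ) : ℂ) • (Q * ρ * Q) - Bᴴ * B := by
    rw [hBH]
    exact aux_congr S Q P ρ (‖P * S‖ ^ 2) hSH hQH hP.eq hSS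
  have htr0 : 0 ≤ ((((‖P * S‖ ^ 2 : ℝ) : ℂ)) • (Q * ρ * Q) - Bᴴ * B).trace := by
    rw [← hfact]; exact aux_trace_nonneg hcong
  rw [trace_sub, trace_smul] at htr0
  have hre := (Complex.le_def.mp htr0).1
  have hsimp : ((((‖P * S‖ ^ 2 : ℝ) : ℂ)) • (Q * ρ * Q).trace - (Bᴴ * B).trace).re
      = ‖P * S‖ ^ 2 * ((Q * ρ * Q).trace).re - ((Bᴴ * B).trace).re := by
    simp [Complex.sub_re, Complex.smul_re, ← Complex.ofReal_pow]
  rw [hsimp] at hre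
  rw [hnorm]
  simp only [Complex.zero_re] at hre
  linarith
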